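/- Let n ≥ 3. There exists a constant C₀ > 0 depending only on n with the following property: for every x₀ ∈ ℝⁿ, every r > 0, every M ≥ 0, and every function u that is twice continuously differentiable on the open ball B(x₀, 2r) and satisfies Δu(x) ≥ 0 and 0 ≤ u(x) ≤ M for all x ∈ B(x₀, 2r), one has ∫_{B(x₀, r)} Δu(x) dx ≤ C₀ · M · r^(n−2). -/

import Mathlib

open MeasureTheory Metric Finset

/-- The Laplace operator: sum of pure second partial derivatives
(trace of the second derivative). -/
noncomputable def laplacian {n : ℕ} (u : EuclideanSpace ℝ (Fin n) → ℝ)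
    (x : EuclideanSpace ℝ (Fin n)) : ℝ :=
  ∑ i, iteratedFDeriv ℝ 2 u x ![EuclideanSpace.single i 1, EuclideanSpace.single i 1]

/-- smooth 1D cutoff: 1 on `(-∞, c]`, 0 on `[c+5/4, ∞)`. -/
noncomputable def cutFun (c : ℝ) (t : ℝ) : ℝ := 1 - Real.smoothTransition ((t - c) * (4/5))

lemma cutFun_contDiff (c : ℝ) : ContDiff ℝ ((⊤ : ℕ∞) : WithTop ℕ∞) (cutFun c) :=
  contDiff_const.sub (Real.smoothTransition.contDiff.comp
    ((contDiff_id.sub contDiff_const).mul contDiff_const))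

lemma cutFun_one {c t : ℝ} (h : t ≤ c) : cutFun c t = 1 := by
  unfold cutFun
  rw [Real.smoothTransition.zero_of_nonpos (by nlinarith)]; ring

lemma cutFun_zero {c t : ℝ} (h : c + 5/4 ≤ t) : cutFun c t = 0 := by
  unfold cutFun
  rw [Real.smoothTransition.one_of_one_le (by nlinarith)]; ring

lemma cutFun_nonneg (c t : ℝ) : 0 ≤ cutFun c t := by
  have := Real.smoothTransition.le_one ((t - c) * (4/5)); unfold cutFun; linarith

lemma cutFun_le_one (c t : ℝ) : cutFun c t ≤ 1 := by
  have := Real.smoothTransition.nonneg ((t - c) * (4/5)); unfold cutFun; linarith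

/-- radial bump on Euclidean space -/
noncomputable def bump {n : ℕ} (c : ℝ) (z : EuclideanSpace ℝ (Fin n)) : ℝ := cutFun c (‖z‖^2)

lemma bump_contDiff {n : ℕ} (c : ℝ) : ContDiff ℝ ((⊤ : ℕ∞) : WithTop ℕ∞) (bump (n := n) c) :=
  (cutFun_contDiff c).comp (contDiff_norm_sq ℝ)

lemma bump_one {n : ℕ} {c : ℝ} {z : EuclideanSpace ℝ (Fin n)} (h : ‖z‖^2 ≤ c) :
    bump c z = 1 := cutFun_one h

lemma bump_zero {n : ℕ} {c : ℝ} {z : EuclideanSpace ℝ (Fin n)} (h : c + 5/4 ≤ ‖z‖^2) :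
    bump c z = 0 := cutFun_zero h

lemma bump_nonneg {n : ℕ} (c : ℝ) (z : EuclideanSpace ℝ (Fin n)) : 0 ≤ bump c z :=
  cutFun_nonneg _ _

lemma bump_le_one {n : ℕ} (c : ℝ) (z : EuclideanSpace ℝ (Fin n)) : bump c z ≤ 1 :=
  cutFun_le_one _ _

lemma fderiv_eq_zero_of_eqOn_zero {X Y : Type*} [NormedAddCommGroup X] [NormedSpace ℝ X]
    [NormedAddCommGroup Y] [NormedSpace ℝ Y] {f : X → Y} {U : Set X} (hU : IsOpen U)
    (h : ∀ x ∈ U, f x = 0) {x : X} (hx : x ∈ U) : fderiv ℝ f x = 0 := by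
  have hev : f =ᶠ[nhds x] (fun _ => (0 : Y)) := Filter.eventuallyEq_of_mem (hU.mem_nhds hx) h
  rw [hev.fderiv_eq]
  exact fderiv_const_apply 0

lemma exists_bound {n : ℕ} {f : EuclideanSpace ℝ (Fin n) → ℝ} (hf : Continuous f)
    (h0 : ∀ z, 2 ≤ ‖z‖ → f z = 0) : ∃ K : ℝ, 0 < K ∧ ∀ z, |f z| ≤ K := by
  obtain ⟨C, hC⟩ :=
    (isCompact_closedBall (0 : EuclideanSpace ℝ (Fin n)) 2).exists_bound_of_continuousOn
      hf.continuousOn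
  refine ⟨max C 1, lt_of_lt_of_le one_pos (le_max_right _ _), fun z => ?_⟩
  by_cases hz : z ∈ closedBall (0 : EuclideanSpace ℝ (Fin n)) 2
  · exact le_trans (hC z hz) (le_max_left _ _)
  · have h2 : 2 < ‖z‖ := by simpa [mem_closedBall, dist_zero_right, not_le] using hz
    rw [h0 z h2.le]; simp

/-- integration by parts twice -/
lemma key_ibp {n : ℕ} (φ w : EuclideanSpace ℝ (Fin n) → ℝ) (v : EuclideanSpace ℝ (Fin n))
    (hφ : ContDiff ℝ ((⊤ : ℕ∞) : WithTop ℕ∞) φ) (hw : ContDiff ℝ 2 w)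
    (I1 : Integrable (fun x => φ x * fderiv ℝ (fun y => fderiv ℝ w y v) x v))
    (I2 : Integrable (fun x => fderiv ℝ φ x v * fderiv ℝ w x v))
    (I3 : Integrable (fun x => φ x * fderiv ℝ w x v))
    (I4 : Integrable (fun x => fderiv ℝ (fun y => fderiv ℝ φ y v) x v * w x))
    (I5 : Integrable (fun x => fderiv ℝ φ x v * w x)) :
    ∫ x, φ x * fderiv ℝ (fun y => fderiv ℝ w y v) x v
      = ∫ x, fderiv ℝ (fun y => fderiv ℝ φ y v) x v * w x := by
  have hg1 : ContDiff ℝ 1 (fun y => fderiv ℝ w y v) :=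
    (hw.fderiv_right (m := 1) le_rfl).clm_apply contDiff_const
  have hF1 : ContDiff ℝ ((⊤ : ℕ∞) : WithTop ℕ∞) (fun y => fderiv ℝ φ y v) :=
    (hφ.fderiv_right (m := ((⊤ : ℕ∞) : WithTop ℕ∞)) (by exact_mod_cast le_top)).clm_apply contDiff_const
  have step1 : ∫ x, φ x * fderiv ℝ (fun y => fderiv ℝ w y v) x v
      = - ∫ x, fderiv ℝ φ x v * fderiv ℝ w x v :=
    integral_mul_fderiv_eq_neg_fderiv_mul_of_integrable I2 I1 I3
      (fun x _ => hφ.differentiable (by simp) x) (fun x _ => hg1.differentiable one_ne_zero x)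
  have step2 : ∫ x, (fun y => fderiv ℝ φ y v) x * fderiv ℝ w x v
      = - ∫ x, fderiv ℝ (fun y => fderiv ℝ φ y v) x v * w x :=
    integral_mul_fderiv_eq_neg_fderiv_mul_of_integrable I4 I2 I5
      (fun x _ => hF1.differentiable (by simp) x) (fun x _ => hw.differentiable (by norm_num) x)
  simp only at step2
  rw [step1, step2, neg_neg]

section part2
variable {n : ℕ}

local notation "E" => EuclideanSpace ℝ (Fin n)

lemma fderiv_comp_scale {f : E → ℝ} (hf : ContDiff ℝ ((⊤ : ℕ∞) : WithTop ℕ∞) f)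
    {r : ℝ} (hr : r ≠ 0) (x₀ x v : E) :
    fderiv ℝ (fun y => f (r⁻¹ • (y - x₀))) x v = r⁻¹ * fderiv ℝ f (r⁻¹ • (x - x₀)) v := by
  have hA : HasFDerivAt (fun y : E => r⁻¹ • (y - x₀))
      (r⁻¹ • ContinuousLinearMap.id ℝ E) x :=
    ((hasFDerivAt_id x).sub_const x₀).const_smul r⁻¹
  have h1 : HasFDerivAt (fun y => f (r⁻¹ • (y - x₀)))
      ((fderiv ℝ f (r⁻¹ • (x - x₀))).comp (r⁻¹ • ContinuousLinearMap.id ℝ E)) x :=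
    ((hf.differentiable (by simp) (r⁻¹ • (x - x₀))).hasFDerivAt).comp x hA
  rw [h1.fderiv]
  simp [ContinuousLinearMap.comp_apply, _root_.map_smul, smul_eq_mul]

lemma contDiff_scale (r : ℝ) (x₀ : E) :
    ContDiff ℝ ((⊤ : ℕ∞) : WithTop ℕ∞) (fun y : E => r⁻¹ • (y - x₀)) :=
  (contDiff_id.sub contDiff_const).const_smul r⁻¹

lemma fderiv2_comp_scale {f : E → ℝ} (hf : ContDiff ℝ ((⊤ : ℕ∞) : WithTop ℕ∞) f)
    {r : ℝ} (hr : r ≠ 0) (x₀ x v : E) :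
    fderiv ℝ (fun y => fderiv ℝ (fun z => f (r⁻¹ • (z - x₀))) y v) x v
      = r⁻¹ * (r⁻¹ * fderiv ℝ (fun z => fderiv ℝ f z v) (r⁻¹ • (x - x₀)) v) := by
  have hfd : ContDiff ℝ ((⊤ : ℕ∞) : WithTop ℕ∞) (fun z => fderiv ℝ f z v) :=
    (hf.fderiv_right (m := ((⊤ : ℕ∞) : WithTop ℕ∞)) (by exact_mod_cast le_top)).clm_apply
      contDiff_const
  have heq : (fun y => fderiv ℝ (fun z => f (r⁻¹ • (z - x₀))) y v)
      = fun y => r⁻¹ * (fun z => fderiv ℝ f z v) (r⁻¹ • (y - x₀)) :=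
    funext fun y => fderiv_comp_scale hf hr x₀ y v
  rw [heq]
  have hdiff : DifferentiableAt ℝ (fun y : E => (fun z => fderiv ℝ f z v) (r⁻¹ • (y - x₀))) x :=
    ((hfd.comp (contDiff_scale r x₀)).differentiable (by simp)).differentiableAt
  rw [fderiv_const_mul hdiff r⁻¹]
  rw [ContinuousLinearMap.smul_apply, smul_eq_mul, fderiv_comp_scale hfd hr x₀ x v]

lemma hfun_eq_iterated {u : E → ℝ} {x : E} (hu : ContDiffAt ℝ 2 u x) (v : E) :
    fderiv ℝ (fun y => fderiv ℝ u y v) x v = iteratedFDeriv ℝ 2 u x ![v, v] := by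
  rw [iteratedFDeriv_two_apply]
  have hd : DifferentiableAt ℝ (fderiv ℝ u) x :=
    (hu.fderiv_right (m := 1) le_rfl).differentiableAt one_ne_zero
  have h2 : fderiv ℝ ((ContinuousLinearMap.apply ℝ ℝ v) ∘ (fderiv ℝ u)) x
      = (ContinuousLinearMap.apply ℝ ℝ v).comp (fderiv ℝ (fderiv ℝ u) x) := by
    rw [fderiv_comp x (ContinuousLinearMap.differentiableAt _) hd, ContinuousLinearMap.fderiv]
  have h3 : (fun y => fderiv ℝ u y v) = (ContinuousLinearMap.apply ℝ ℝ v) ∘ (fderiv ℝ u) := rfl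
  rw [h3, h2]
  simp

end part2

set_option maxHeartbeats 2000000 in
/-- Lemma 3.1: for a subharmonic function `u` with `0 ≤ u ≤ M` on `B(x₀, 2r)`,
the integral of `Δu` over `B(x₀, r)` is bounded by `C₀ · M · r^(n−2)`,
with `C₀` depending only on the dimension `n ≥ 3`. -/
theorem stmt4 {n : ℕ} (hn : 3 ≤ n) :
    ∃ C₀ : ℝ, 0 < C₀ ∧
      ∀ (x₀ : EuclideanSpace ℝ (Fin n)) (r M : ℝ), 0 < r → 0 ≤ M →
        ∀ u : EuclideanSpace ℝ (Fin n) → ℝ,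
          ContDiffOn ℝ 2 u (ball x₀ (2 * r)) →
          (∀ x ∈ ball x₀ (2 * r), 0 ≤ laplacian u x) →
          (∀ x ∈ ball x₀ (2 * r), 0 ≤ u x ∧ u x ≤ M) →
          ∫ x in ball x₀ r, laplacian u x ≤ C₀ * M * r ^ ((n : ℝ) - 2) := by

  classical
  -- the second derivatives of the model bump function `bump 1`
  set P0 : EuclideanSpace ℝ (Fin n) → EuclideanSpace ℝ (Fin n) → ℝ := fun v z =>
    fderiv ℝ (fun y => fderiv ℝ (bump (n := n) 1) y v) z v with hP0def
  have hTle : ∀ m : WithTop ℕ∞, m + 1 ≤ ((⊤ : ℕ∞) : WithTop ℕ∞) → True := fun _ _ => trivial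
  have hD1sm : ∀ v : EuclideanSpace ℝ (Fin n),
      ContDiff ℝ ((⊤ : ℕ∞) : WithTop ℕ∞) (fun y => fderiv ℝ (bump (n := n) 1) y v) := by
    intro v
    exact ((bump_contDiff 1).fderiv_right (m := ((⊤ : ℕ∞) : WithTop ℕ∞))
      (by exact_mod_cast le_top)).clm_apply contDiff_const
  have hP0sm : ∀ v, ContDiff ℝ ((⊤ : ℕ∞) : WithTop ℕ∞) (P0 v) := by
    intro v
    exact (((hD1sm v).fderiv_right (m := ((⊤ : ℕ∞) : WithTop ℕ∞))
      (by exact_mod_cast le_top)).clm_apply contDiff_const)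
  -- the model bump and its derivatives vanish where ‖z‖² > 9/4
  have hU9o : IsOpen {z : EuclideanSpace ℝ (Fin n) | 9/4 < ‖z‖^2} :=
    isOpen_lt continuous_const (continuous_norm.pow 2)
  have hb9 : ∀ z ∈ {z : EuclideanSpace ℝ (Fin n) | 9/4 < ‖z‖^2}, bump (n := n) 1 z = 0 := by
    intro z hz
    simp only [Set.mem_setOf_eq] at hz
    exact bump_zero (by linarith)
  have hD19 : ∀ v, ∀ z ∈ {z : EuclideanSpace ℝ (Fin n) | 9/4 < ‖z‖^2},
      (fun y => fderiv ℝ (bump (n := n) 1) y v) z = 0 := by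
    intro v z hz
    simp only
    rw [fderiv_eq_zero_of_eqOn_zero hU9o hb9 hz]
    rfl
  have hP09 : ∀ v, ∀ z ∈ {z : EuclideanSpace ℝ (Fin n) | 9/4 < ‖z‖^2}, P0 v z = 0 := by
    intro v z hz
    rw [hP0def]
    simp only
    rw [fderiv_eq_zero_of_eqOn_zero hU9o (hD19 v) hz]
    rfl
  -- global bound for the sum of second derivatives of the model bump
  obtain ⟨K, hK0, hK⟩ : ∃ K : ℝ, 0 < K ∧ ∀ z : EuclideanSpace ℝ (Fin n),
      abs (∑ i, abs (P0 (EuclideanSpace.single i 1) z)) ≤ K := by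
    apply exists_bound
    · exact continuous_finset_sum _ fun i _ => ((hP0sm _).continuous).abs
    · intro z hz
      have hz2 : (9:ℝ)/4 < ‖z‖^2 := by nlinarith
      refine Finset.sum_eq_zero fun i _ => ?_
      rw [hP09 _ z hz2]
      simp
  have hKn : ∀ z : EuclideanSpace ℝ (Fin n), (∑ i, abs (P0 (EuclideanSpace.single i 1) z)) ≤ K :=
    fun z => le_trans (le_abs_self _) (hK z)
  -- volume of the unit ball
  set v₁ : ℝ := (volume (ball (0 : EuclideanSpace ℝ (Fin n)) 1)).toReal with hv₁def
  have hv₁ : 0 < v₁ :=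
    ENNReal.toReal_pos (measure_ball_pos volume 0 one_pos).ne' measure_ball_lt_top.ne
  refine ⟨K * (3/2)^n * v₁, by positivity, ?_⟩
  intro x₀ r M hr hM u hu hΔ hbd
  have hrne : r ≠ 0 := ne_of_gt hr
  have hrinv : 0 < r⁻¹ := inv_pos.mpr hr
  have hrr : r⁻¹ * r = 1 := inv_mul_cancel₀ hrne
  have hAn : ∀ x : EuclideanSpace ℝ (Fin n), ‖r⁻¹ • (x - x₀)‖ = r⁻¹ * ‖x - x₀‖ := by
    intro x
    rw [norm_smul, Real.norm_eq_abs, abs_of_pos hrinv]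
  -- the cutoff functions
  set φ : EuclideanSpace ℝ (Fin n) → ℝ := fun x => bump (n := n) 1 (r⁻¹ • (x - x₀)) with hφdef
  set w : EuclideanSpace ℝ (Fin n) → ℝ :=
    fun x => bump (n := n) (5/2) (r⁻¹ • (x - x₀)) * u x with hwdef
  have hφsm : ContDiff ℝ ((⊤ : ℕ∞) : WithTop ℕ∞) φ :=
    (bump_contDiff 1).comp (contDiff_scale r x₀)
  -- membership arithmetic
  have hm94 : ∀ x : EuclideanSpace ℝ (Fin n), (3/2)*r < ‖x - x₀‖ →
      9/4 < ‖r⁻¹ • (x - x₀)‖^2 := by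
    intro x h
    rw [hAn]
    have h1 : 3/2 < r⁻¹ * ‖x - x₀‖ := by
      have := mul_lt_mul_of_pos_left h hrinv
      calc (3:ℝ)/2 = r⁻¹ * ((3/2)*r) := by field_simp
        _ < r⁻¹ * ‖x - x₀‖ := this
    nlinarith
  have hm154 : ∀ x : EuclideanSpace ℝ (Fin n), 2*r ≤ ‖x - x₀‖ →
      15/4 < ‖r⁻¹ • (x - x₀)‖^2 := by
    intro x h
    rw [hAn]
    have h1 : 2 ≤ r⁻¹ * ‖x - x₀‖ := by
      have := mul_le_mul_of_nonneg_left h (le_of_lt hrinv)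
      calc (2:ℝ) = r⁻¹ * (2*r) := by field_simp
        _ ≤ r⁻¹ * ‖x - x₀‖ := this
    nlinarith
  have hOball : ∀ x : EuclideanSpace ℝ (Fin n), ‖r⁻¹ • (x - x₀)‖^2 < 5/2 →
      x ∈ ball x₀ (2*r) := by
    intro x h
    rw [hAn] at h
    rw [mem_ball_iff_norm]
    have h0 : 0 ≤ r⁻¹ * ‖x - x₀‖ := by positivity
    have h2 : r⁻¹ * ‖x - x₀‖ < 2 := by nlinarith
    have := mul_lt_mul_of_pos_left h2 hr
    calc ‖x - x₀‖ = r * (r⁻¹ * ‖x - x₀‖) := by field_simp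
      _ < r * 2 := this
      _ = 2 * r := by ring
  -- w is C²
  have hw_cd : ContDiff ℝ 2 w := by
    rw [contDiff_iff_contDiffAt]
    intro x
    by_cases hx : x ∈ ball x₀ (2*r)
    · have h1 : ContDiffAt ℝ 2 (fun x => bump (n := n) (5/2) (r⁻¹ • (x - x₀))) x :=
        (((bump_contDiff (n := n) (5/2)).comp (contDiff_scale r x₀)).contDiffAt).of_le
          (by rw [show ((2:WithTop ℕ∞)) = (((2:ℕ∞)):WithTop ℕ∞) from rfl]; exact_mod_cast le_top)
      exact (h1.mul (hu.contDiffAt (isOpen_ball.mem_nhds hx)))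
    · have hx2 : 2*r ≤ ‖x - x₀‖ := by
        rw [mem_ball_iff_norm, not_lt] at hx
        exact hx
      have hU : IsOpen {y : EuclideanSpace ℝ (Fin n) | 15/4 < ‖r⁻¹ • (y - x₀)‖^2} :=
        isOpen_lt continuous_const (((contDiff_scale r x₀).continuous).norm.pow 2)
      have hxU : x ∈ {y : EuclideanSpace ℝ (Fin n) | 15/4 < ‖r⁻¹ • (y - x₀)‖^2} :=
        hm154 x hx2
      refine ContDiffAt.congr_of_eventuallyEq (contDiffAt_const (c := 0)) ?_
      filter_upwards [hU.mem_nhds hxU] with y hy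
      show bump (n := n) (5/2) (r⁻¹ • (y - x₀)) * u y = 0
      rw [bump_zero (by linarith)]
      ring
  -- continuity facts
  have hφc : Continuous φ := hφsm.continuous
  have hFsm : ∀ v : EuclideanSpace ℝ (Fin n),
      ContDiff ℝ ((⊤ : ℕ∞) : WithTop ℕ∞) (fun x => fderiv ℝ φ x v) := fun v =>
    (hφsm.fderiv_right (m := ((⊤ : ℕ∞) : WithTop ℕ∞)) (by exact_mod_cast le_top)).clm_apply
      contDiff_const
  have hPsm : ∀ v : EuclideanSpace ℝ (Fin n),
      ContDiff ℝ ((⊤ : ℕ∞) : WithTop ℕ∞) (fun x => fderiv ℝ (fun y => fderiv ℝ φ y v) x v) :=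
    fun v => (((hFsm v).fderiv_right (m := ((⊤ : ℕ∞) : WithTop ℕ∞))
      (by exact_mod_cast le_top)).clm_apply contDiff_const)
  have hwc : Continuous w := hw_cd.continuous
  have hgsm : ∀ v : EuclideanSpace ℝ (Fin n), ContDiff ℝ 1 (fun x => fderiv ℝ w x v) :=
    fun v => (hw_cd.fderiv_right (m := 1) le_rfl).clm_apply contDiff_const
  have hHc : ∀ v : EuclideanSpace ℝ (Fin n),
      Continuous (fun x => fderiv ℝ (fun y => fderiv ℝ w y v) x v) := fun v =>
    ((((hgsm v).fderiv_right (m := 0) le_rfl).clm_apply contDiff_const)).continuous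
  -- vanishing of φ and its derivatives outside closedBall x₀ ((3/2)*r)
  have hU94o : IsOpen {y : EuclideanSpace ℝ (Fin n) | 9/4 < ‖r⁻¹ • (y - x₀)‖^2} :=
    isOpen_lt continuous_const (((contDiff_scale r x₀).continuous).norm.pow 2)
  have hφ94 : ∀ y ∈ {y : EuclideanSpace ℝ (Fin n) | 9/4 < ‖r⁻¹ • (y - x₀)‖^2}, φ y = 0 := by
    intro y hy
    show bump (n := n) 1 (r⁻¹ • (y - x₀)) = 0
    exact bump_zero (by linarith [hy.out])
  have hF94 : ∀ v : EuclideanSpace ℝ (Fin n),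
      ∀ y ∈ {y : EuclideanSpace ℝ (Fin n) | 9/4 < ‖r⁻¹ • (y - x₀)‖^2},
      (fun x => fderiv ℝ φ x v) y = 0 := by
    intro v y hy
    simp only
    rw [fderiv_eq_zero_of_eqOn_zero hU94o hφ94 hy]
    rfl
  have hP94 : ∀ v : EuclideanSpace ℝ (Fin n),
      ∀ y ∈ {y : EuclideanSpace ℝ (Fin n) | 9/4 < ‖r⁻¹ • (y - x₀)‖^2},
      fderiv ℝ (fun x => fderiv ℝ φ x v) y v = 0 := by
    intro v y hy
    rw [fderiv_eq_zero_of_eqOn_zero hU94o (hF94 v) hy]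
    rfl
  -- vanishing of w outside of closedBall x₀ (2r)
  have hw0 : ∀ x : EuclideanSpace ℝ (Fin n), 2*r ≤ ‖x - x₀‖ → w x = 0 := by
    intro x hx
    show bump (n := n) (5/2) (r⁻¹ • (x - x₀)) * u x = 0
    rw [bump_zero (by linarith [hm154 x hx])]
    ring
  have hφ0' : ∀ x : EuclideanSpace ℝ (Fin n), 2*r ≤ ‖x - x₀‖ → φ x = 0 := by
    intro x hx
    refine hφ94 x ?_
    exact hm94 x (by nlinarith)
  have hF0' : ∀ (v : EuclideanSpace ℝ (Fin n)) (x : EuclideanSpace ℝ (Fin n)),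
      2*r ≤ ‖x - x₀‖ → fderiv ℝ φ x v = 0 := by
    intro v x hx
    exact hF94 v x (hm94 x (by nlinarith))
  -- integrability of everything with compact support
  have hIntGen : ∀ f : EuclideanSpace ℝ (Fin n) → ℝ, Continuous f →
      (∀ x, 2*r ≤ ‖x - x₀‖ → f x = 0) → Integrable f := by
    intro f hc h0
    refine hc.integrable_of_hasCompactSupport
      (HasCompactSupport.intro (isCompact_closedBall x₀ (2*r)) ?_)
    intro x hx
    refine h0 x ?_
    have h1 : 2*r < dist x x₀ := by
      simpa [mem_closedBall, not_le] using hx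
    rw [dist_eq_norm] at h1
    linarith
  have I1 : ∀ v : EuclideanSpace ℝ (Fin n),
      Integrable (fun x => φ x * fderiv ℝ (fun y => fderiv ℝ w y v) x v) := fun v =>
    hIntGen _ (hφc.mul (hHc v)) (fun x hx => by rw [hφ0' x hx]; ring)
  have I2 : ∀ v : EuclideanSpace ℝ (Fin n),
      Integrable (fun x => fderiv ℝ φ x v * fderiv ℝ w x v) := fun v =>
    hIntGen _ (((hFsm v).continuous).mul ((hgsm v).continuous))
      (fun x hx => by rw [hF0' v x hx]; ring)
  have I3 : ∀ v : EuclideanSpace ℝ (Fin n), Integrable (fun x => φ x * fderiv ℝ w x v) :=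
    fun v => hIntGen _ (hφc.mul ((hgsm v).continuous)) (fun x hx => by rw [hφ0' x hx]; ring)
  have I4 : ∀ v : EuclideanSpace ℝ (Fin n),
      Integrable (fun x => fderiv ℝ (fun y => fderiv ℝ φ y v) x v * w x) := fun v =>
    hIntGen _ (((hPsm v).continuous).mul hwc) (fun x hx => by rw [hw0 x hx]; ring)
  have I5 : ∀ v : EuclideanSpace ℝ (Fin n),
      Integrable (fun x => fderiv ℝ φ x v * w x) := fun v =>
    hIntGen _ (((hFsm v).continuous).mul hwc) (fun x hx => by rw [hw0 x hx]; ring)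
  -- integration by parts
  have hibp : ∀ v : EuclideanSpace ℝ (Fin n),
      ∫ x, φ x * fderiv ℝ (fun y => fderiv ℝ w y v) x v
        = ∫ x, fderiv ℝ (fun y => fderiv ℝ φ y v) x v * w x := fun v =>
    key_ibp φ w v hφsm hw_cd (I1 v) (I2 v) (I3 v) (I4 v) (I5 v)
  -- identification with the laplacian of u on the region O = {‖A y‖² < 5/2}
  have hOopen : IsOpen {y : EuclideanSpace ℝ (Fin n) | ‖r⁻¹ • (y - x₀)‖^2 < 5/2} :=
    isOpen_lt (((contDiff_scale r x₀).continuous).norm.pow 2) continuous_const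
  have hwOeq : ∀ z ∈ {y : EuclideanSpace ℝ (Fin n) | ‖r⁻¹ • (y - x₀)‖^2 < 5/2}, w z = u z := by
    intro z hz
    show bump (n := n) (5/2) (r⁻¹ • (z - x₀)) * u z = u z
    rw [bump_one (le_of_lt hz.out)]
    ring
  have hHiter : ∀ (v : EuclideanSpace ℝ (Fin n)),
      ∀ x ∈ {y : EuclideanSpace ℝ (Fin n) | ‖r⁻¹ • (y - x₀)‖^2 < 5/2},
      fderiv ℝ (fun y => fderiv ℝ w y v) x v = iteratedFDeriv ℝ 2 u x ![v, v] := by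
    intro v x hx
    have hev : (fun y => fderiv ℝ w y v) =ᶠ[nhds x] (fun y => fderiv ℝ u y v) := by
      filter_upwards [hOopen.mem_nhds hx] with y hy
      have hwu : w =ᶠ[nhds y] u := Filter.eventuallyEq_of_mem (hOopen.mem_nhds hy) hwOeq
      rw [hwu.fderiv_eq]
    rw [Filter.EventuallyEq.fderiv_eq hev]
    exact hfun_eq_iterated (hu.contDiffAt (isOpen_ball.mem_nhds (hOball x hx.out))) v
  -- Step 1 : on ball x₀ r the laplacian coincides with the localized sum
  have hstep1 : ∫ x in ball x₀ r, laplacian u x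
      = ∫ x in ball x₀ r, ∑ i, φ x * fderiv ℝ
          (fun y => fderiv ℝ w y (EuclideanSpace.single i 1)) x (EuclideanSpace.single i 1) := by
    refine setIntegral_congr_fun measurableSet_ball ?_
    intro x hx
    rw [mem_ball_iff_norm] at hx
    have hsq : ‖r⁻¹ • (x - x₀)‖^2 < 1 := by
      rw [hAn]
      have h1 : r⁻¹ * ‖x - x₀‖ < 1 := by
        have := mul_lt_mul_of_pos_left hx hrinv
        calc r⁻¹ * ‖x - x₀‖ < r⁻¹ * r := this
          _ = 1 := hrr
      have h0 : 0 ≤ r⁻¹ * ‖x - x₀‖ := by positivity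
      nlinarith
    have hxO : x ∈ {y : EuclideanSpace ℝ (Fin n) | ‖r⁻¹ • (y - x₀)‖^2 < 5/2} := by
      show ‖r⁻¹ • (x - x₀)‖^2 < 5/2
      linarith
    have hφ1 : φ x = 1 := by
      show bump (n := n) 1 (r⁻¹ • (x - x₀)) = 1
      exact bump_one (le_of_lt hsq)
    unfold laplacian
    refine Finset.sum_congr rfl fun i _ => ?_
    rw [hφ1, one_mul, hHiter _ x hxO]
  -- nonnegativity of the localized sum
  have hG_nonneg : ∀ x : EuclideanSpace ℝ (Fin n), 0 ≤ ∑ i, φ x * fderiv ℝ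
      (fun y => fderiv ℝ w y (EuclideanSpace.single i 1)) x (EuclideanSpace.single i 1) := by
    intro x
    by_cases hx9 : ‖r⁻¹ • (x - x₀)‖^2 < 9/4
    · have hxO : x ∈ {y : EuclideanSpace ℝ (Fin n) | ‖r⁻¹ • (y - x₀)‖^2 < 5/2} := by
        show ‖r⁻¹ • (x - x₀)‖^2 < 5/2
        linarith
      have hxb : x ∈ ball x₀ (2*r) := hOball x (by linarith)
      have heq : ∑ i, φ x * fderiv ℝ
          (fun y => fderiv ℝ w y (EuclideanSpace.single i 1)) x (EuclideanSpace.single i 1)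
          = φ x * laplacian u x := by
        unfold laplacian
        rw [Finset.mul_sum]
        refine Finset.sum_congr rfl fun i _ => ?_
        rw [hHiter _ x hxO]
      rw [heq]
      have : (0:ℝ) ≤ φ x := bump_nonneg _ _
      exact mul_nonneg this (hΔ x hxb)
    · have hφx : φ x = 0 := by
        show bump (n := n) 1 (r⁻¹ • (x - x₀)) = 0
        exact bump_zero (by linarith [not_lt.mp hx9])
      refine le_of_eq ?_
      refine (Finset.sum_eq_zero fun i _ => ?_).symm
      rw [hφx]
      ring
  have hGint : Integrable (fun x => ∑ i, φ x * fderiv ℝ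
      (fun y => fderiv ℝ w y (EuclideanSpace.single i 1)) x (EuclideanSpace.single i 1)) :=
    integrable_finset_sum _ fun i _ => I1 (EuclideanSpace.single i 1)
  -- pointwise bound for the final integrand
  have hwM : ∀ x ∈ closedBall x₀ ((3/2)*r), 0 ≤ w x ∧ w x ≤ M := by
    intro x hx
    have hxb : x ∈ ball x₀ (2*r) := closedBall_subset_ball (by linarith) hx
    obtain ⟨hu0, huM⟩ := hbd x hxb
    constructor
    · exact mul_nonneg (bump_nonneg _ _) hu0
    · calc bump (n := n) (5/2) (r⁻¹ • (x - x₀)) * u x ≤ 1 * u x :=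
          mul_le_mul_of_nonneg_right (bump_le_one _ _) hu0
        _ = u x := one_mul _
        _ ≤ M := huM
  have hPbound : ∀ x : EuclideanSpace ℝ (Fin n),
      abs (∑ i, fderiv ℝ (fun y => fderiv ℝ φ y (EuclideanSpace.single i 1)) x
        (EuclideanSpace.single i 1)) ≤ K / r^2 := by
    intro x
    have hPe : ∀ i : Fin n, fderiv ℝ (fun y => fderiv ℝ φ y (EuclideanSpace.single i 1)) x
        (EuclideanSpace.single i 1)
        = r⁻¹ * (r⁻¹ * P0 (EuclideanSpace.single i 1) (r⁻¹ • (x - x₀))) := fun i =>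
      fderiv2_comp_scale (bump_contDiff 1) hrne x₀ x (EuclideanSpace.single i 1)
    calc abs (∑ i, fderiv ℝ (fun y => fderiv ℝ φ y (EuclideanSpace.single i 1)) x
        (EuclideanSpace.single i 1))
        ≤ ∑ i, abs (fderiv ℝ (fun y => fderiv ℝ φ y (EuclideanSpace.single i 1)) x
          (EuclideanSpace.single i 1)) := Finset.abs_sum_le_sum_abs _ _
      _ = ∑ i, r⁻¹ * (r⁻¹ * abs (P0 (EuclideanSpace.single i 1) (r⁻¹ • (x - x₀)))) := by
          refine Finset.sum_congr rfl fun i _ => ?_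
          rw [hPe i, abs_mul, abs_mul, abs_of_pos hrinv]
      _ = r⁻¹ * (r⁻¹ * ∑ i, abs (P0 (EuclideanSpace.single i 1) (r⁻¹ • (x - x₀)))) := by
          rw [← Finset.mul_sum, ← Finset.mul_sum]
      _ ≤ r⁻¹ * (r⁻¹ * K) := by
          have := hKn (r⁻¹ • (x - x₀))
          have h2 : r⁻¹ * ∑ i, abs (P0 (EuclideanSpace.single i 1) (r⁻¹ • (x - x₀)))
              ≤ r⁻¹ * K := mul_le_mul_of_nonneg_left this (le_of_lt hrinv)
          exact mul_le_mul_of_nonneg_left h2 (le_of_lt hrinv)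
      _ = K / r^2 := by rw [div_eq_mul_inv, pow_two, mul_inv]; ring
  have hmono : ∀ x : EuclideanSpace ℝ (Fin n),
      (∑ i, fderiv ℝ (fun y => fderiv ℝ φ y (EuclideanSpace.single i 1)) x
        (EuclideanSpace.single i 1)) * w x
      ≤ Set.indicator (closedBall x₀ ((3/2)*r)) (fun _ => K * M / r^2) x := by
    intro x
    by_cases hx : x ∈ closedBall x₀ ((3/2)*r)
    · rw [Set.indicator_of_mem hx]
      obtain ⟨hw0', hwM'⟩ := hwM x hx
      calc (∑ i, fderiv ℝ (fun y => fderiv ℝ φ y (EuclideanSpace.single i 1)) x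
            (EuclideanSpace.single i 1)) * w x
          ≤ abs (∑ i, fderiv ℝ (fun y => fderiv ℝ φ y (EuclideanSpace.single i 1)) x
            (EuclideanSpace.single i 1)) * w x :=
            mul_le_mul_of_nonneg_right (le_abs_self _) hw0'
        _ ≤ (K / r^2) * M := by
            refine mul_le_mul (hPbound x) hwM' hw0' ?_
            positivity
        _ = K * M / r^2 := by ring
    · rw [Set.indicator_of_notMem hx]
      have hxd : (3/2)*r < ‖x - x₀‖ := by
        rw [mem_closedBall, not_le, dist_eq_norm] at hx
        exact hx
      have : ∀ i : Fin n, fderiv ℝ (fun y => fderiv ℝ φ y (EuclideanSpace.single i 1)) x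
          (EuclideanSpace.single i 1) = 0 := fun i =>
        hP94 (EuclideanSpace.single i 1) x (hm94 x hxd)
      rw [Finset.sum_congr rfl fun i _ => this i]
      simp
  have hLHSint : Integrable (fun x =>
      (∑ i, fderiv ℝ (fun y => fderiv ℝ φ y (EuclideanSpace.single i 1)) x
        (EuclideanSpace.single i 1)) * w x) := by
    refine hIntGen _ ?_ ?_
    · exact (continuous_finset_sum _ fun i _ => (hPsm (EuclideanSpace.single i 1)).continuous).mul
        hwc
    · intro x hx
      rw [hw0 x hx]
      ring
  have hind : Integrable (Set.indicator (closedBall x₀ ((3/2)*r))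
      (fun _ => K * M / r^2) : EuclideanSpace ℝ (Fin n) → ℝ) := by
    rw [integrable_indicator_iff measurableSet_closedBall]
    exact integrableOn_const measure_closedBall_lt_top.ne
  -- volume computation
  have hvol : (volume (closedBall x₀ ((3/2)*r))).toReal = ((3/2)*r)^n * v₁ := by
    rw [Measure.addHaar_closedBall volume x₀ (by positivity)]
    rw [ENNReal.toReal_mul, ENNReal.toReal_ofReal (by positivity)]
    congr 2
    exact finrank_euclideanSpace_fin
  -- the exponent
  have hrpow : r ^ ((n:ℝ) - 2) = r^n / r^2 := by
    rw [Real.rpow_sub hr, Real.rpow_natCast, show ((2:ℝ)) = ((2:ℕ):ℝ) by norm_num,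
      Real.rpow_natCast]
  -- assembling everything
  calc ∫ x in ball x₀ r, laplacian u x
      = ∫ x in ball x₀ r, ∑ i, φ x * fderiv ℝ
          (fun y => fderiv ℝ w y (EuclideanSpace.single i 1)) x (EuclideanSpace.single i 1) :=
        hstep1
    _ ≤ ∫ x, ∑ i, φ x * fderiv ℝ
          (fun y => fderiv ℝ w y (EuclideanSpace.single i 1)) x (EuclideanSpace.single i 1) :=
        setIntegral_le_integral hGint (Filter.Eventually.of_forall hG_nonneg)
    _ = ∑ i, ∫ x, φ x * fderiv ℝ
          (fun y => fderiv ℝ w y (EuclideanSpace.single i 1)) x (EuclideanSpace.single i 1) :=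
        integral_finset_sum _ fun i _ => I1 (EuclideanSpace.single i 1)
    _ = ∑ i, ∫ x, fderiv ℝ (fun y => fderiv ℝ φ y (EuclideanSpace.single i 1)) x
          (EuclideanSpace.single i 1) * w x :=
        Finset.sum_congr rfl fun i _ => hibp (EuclideanSpace.single i 1)
    _ = ∫ x, ∑ i, fderiv ℝ (fun y => fderiv ℝ φ y (EuclideanSpace.single i 1)) x
          (EuclideanSpace.single i 1) * w x :=
        (integral_finset_sum _ fun i _ => I4 (EuclideanSpace.single i 1)).symm
    _ = ∫ x, (∑ i, fderiv ℝ (fun y => fderiv ℝ φ y (EuclideanSpace.single i 1)) x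
          (EuclideanSpace.single i 1)) * w x := by
        congr 1
        funext x
        rw [Finset.sum_mul]
    _ ≤ ∫ x, Set.indicator (closedBall x₀ ((3/2)*r)) (fun _ => K * M / r^2) x :=
        integral_mono hLHSint hind hmono
    _ = (volume (closedBall x₀ ((3/2)*r))).toReal * (K * M / r^2) := by
        rw [integral_indicator_const _ measurableSet_closedBall]
        rw [smul_eq_mul]
        rfl
    _ = ((3/2)*r)^n * v₁ * (K * M / r^2) := by rw [hvol]
    _ ≤ K * (3/2)^n * v₁ * M * r ^ ((n:ℝ) - 2) := by
        rw [hrpow, mul_pow]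
        apply le_of_eq
        field_simp
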